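/- Let P_n be projections on a Hilbert space with P_m P_n = δ_{mn} P_n, let λ_n ∈ ℂ with Re λ_n = an + b for constants a > 0, b, and suppose s = limsup n^{-1} log ‖P_n‖ satisfies 0 < s < ∞. Then the series Σ_n e^{-λ_n t} P_n converges in operator norm for t > s/a and fails to converge in operator norm for 0 ≤ t < s/a. -/

import Mathlib

open Filter Complex


/-- Norm convergence/divergence of the spectral expansion `∑ e^{-λ_n t} P_n`. -/
theorem spectral_expansion_convergence
    {H : Type*} [NormedAddCommGroup H] [InnerProductSpace ℂ H] [CompleteSpace H]
    (P : ℕ → H →L[ℂ] H)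
    (hproj : ∀ m n, (P m).comp (P n) = if m = n then P n else 0)
    (lam : ℕ → ℂ) (a b : ℝ) (ha : 0 < a)
    (hlam : ∀ n, (lam n).re = a * n + b)
    (s : ℝ)
    (hs : Filter.limsup (fun n : ℕ => (n : ℝ)⁻¹ * Real.log ‖P n‖) Filter.atTop = s)
    (hs0 : 0 < s) :
    ∀ t : ℝ,
      (t > s / a →
        ∃ L : H →L[ℂ] H,
          Filter.Tendsto
            (fun N => ∑ n ∈ Finset.range N, Complex.exp (-(lam n) * t) • P n)
            Filter.atTop (nhds L)) ∧
      (0 ≤ t → t < s / a →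
        ¬∃ L : H →L[ℂ] H,
          Filter.Tendsto
            (fun N => ∑ n ∈ Finset.range N, Complex.exp (-(lam n) * t) • P n)
            Filter.atTop (nhds L)) := by
  -- notation
  set f : ℕ → ℝ := fun n => (n : ℝ)⁻¹ * Real.log ‖P n‖ with hf
  set S : Set ℝ := {x | ∀ᶠ n in atTop, f n ≤ x} with hSdef
  have hsInf : sInf S = s := by
    rw [Filter.limsup_eq] at hs; exact hs
  have hSne : S.Nonempty := by
    by_contra h
    rw [Set.not_nonempty_iff_eq_empty] at h
    rw [h, Real.sInf_empty] at hsInf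
    exact absurd hsInf.symm (ne_of_gt hs0)
  have hSbdd : BddBelow S := by
    by_contra h
    rw [Real.sInf_of_not_bddBelow h] at hsInf
    exact absurd hsInf.symm (ne_of_gt hs0)
  -- norm of a generic term
  have hterm : ∀ (t : ℝ) (n : ℕ),
      ‖Complex.exp (-(lam n) * t) • P n‖ = Real.exp (-(a * n + b) * t) * ‖P n‖ := by
    intro t n
    rw [norm_smul, Complex.norm_exp]
    have h1 : (-(lam n) * (t : ℂ)).re = -(a * n + b) * t := by
      simp [Complex.mul_re, hlam n]; ring
    rw [h1]
  intro t
  constructor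
  · -- convergence
    intro ht
    have hat : s < a * t := by
      rw [gt_iff_lt, div_lt_iff₀ ha] at ht
      linarith [mul_comm t a]
    set ε : ℝ := (a * t - s) / 2 with hε
    have hε0 : 0 < ε := by rw [hε]; linarith
    -- eventually f n ≤ s + ε
    have hub : ∃ x ∈ S, x < s + ε := by
      have h2 : sInf S < s + ε := by rw [hsInf]; linarith
      exact (csInf_lt_iff hSbdd hSne).mp h2
    obtain ⟨x, hxS, hx⟩ := hub
    have hev : ∀ᶠ n in atTop, f n ≤ s + ε := hxS.mono fun n hn => hn.trans hx.le
    have hbound : ∀ᶠ n in atTop,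
        ‖Complex.exp (-(lam n) * t) • P n‖ ≤ Real.exp (-b * t) * Real.exp (-ε) ^ n := by
      filter_upwards [hev, Filter.eventually_ge_atTop 1] with n hn hn1
      have hnpos : (0 : ℝ) < n := by exact_mod_cast hn1
      have hlog : Real.log ‖P n‖ ≤ (s + ε) * n := by
        have := (mul_le_mul_iff_left₀ hnpos).mpr hn
        rw [hf] at this
        calc Real.log ‖P n‖ = (n : ℝ)⁻¹ * Real.log ‖P n‖ * n := by
              field_simp
          _ ≤ (s + ε) * n := this
      have hPn : ‖P n‖ ≤ Real.exp ((s + ε) * n) := by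
        rcases eq_or_lt_of_le (norm_nonneg (P n)) with h0 | h0
        · rw [← h0]; exact (Real.exp_pos _).le
        · exact (Real.log_le_iff_le_exp h0).mp hlog
      rw [hterm]
      calc Real.exp (-(a * n + b) * t) * ‖P n‖
          ≤ Real.exp (-(a * n + b) * t) * Real.exp ((s + ε) * n) :=
            mul_le_mul_of_nonneg_left hPn (Real.exp_pos _).le
        _ = Real.exp (-b * t) * Real.exp (-ε) ^ n := by
            rw [← Real.exp_nat_mul, ← Real.exp_add, ← Real.exp_add]
            congr 1
            have : s + ε - a * t = -ε := by rw [hε]; ring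
            nlinarith [this]
    have hgsum : Summable (fun n : ℕ => Real.exp (-b * t) * Real.exp (-ε) ^ n) :=
      (summable_geometric_of_lt_one (Real.exp_pos _).le
        (Real.exp_lt_one_iff.mpr (by linarith))).mul_left _
    have hsum : Summable (fun n : ℕ => Complex.exp (-(lam n) * t) • P n) :=
      Summable.of_norm_bounded_eventually_nat hgsum hbound
    exact ⟨_, hsum.hasSum.tendsto_sum_nat⟩
  · -- divergence
    intro ht0 ht
    rintro ⟨L, hL⟩
    have hat : a * t < s := by
      rw [lt_div_iff₀ ha] at ht
      linarith [mul_comm t a]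
    set ε : ℝ := (s - a * t) / 2 with hε
    have hε0 : 0 < ε := by rw [hε]; linarith
    have hsε : 0 < s - ε := by
      have : 0 ≤ a * t := mul_nonneg ha.le ht0
      rw [hε]; linarith
    -- terms tend to 0
    have hterm0 : Tendsto (fun n : ℕ => Complex.exp (-(lam n) * t) • P n) atTop (nhds 0) := by
      have h1 : Tendsto (fun n : ℕ =>
          (∑ k ∈ Finset.range (n + 1), Complex.exp (-(lam k) * t) • P k)
          - ∑ k ∈ Finset.range n, Complex.exp (-(lam k) * t) • P k) atTop (nhds (L - L)) :=
        (hL.comp (tendsto_add_atTop_nat 1)).sub hL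
      rw [sub_self] at h1
      refine h1.congr fun n => ?_
      rw [Finset.sum_range_succ]; abel
    have hnorm0 : Tendsto (fun n : ℕ => ‖Complex.exp (-(lam n) * t) • P n‖) atTop (nhds 0) := by
      simpa using hterm0.norm
    have hevsmall : ∀ᶠ n in atTop, ‖Complex.exp (-(lam n) * t) • P n‖ < 1 := by
      have := hnorm0.eventually (eventually_lt_nhds (by norm_num : (0:ℝ) < 1))
      exact this
    -- frequently f n > s - ε
    have hfreq : ∃ᶠ n in atTop, s - ε < f n := by
      have hnotin : (s - ε) ∉ S := by
        intro hmem
        have : sInf S ≤ s - ε := csInf_le hSbdd hmem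
        rw [hsInf] at this; linarith
      rw [hSdef, Set.mem_setOf_eq, Filter.not_eventually] at hnotin
      exact hnotin.mono fun n hn => lt_of_not_ge hn
    -- pick n large with both properties
    obtain ⟨N0, hN0⟩ : ∃ N0 : ℕ, b * t < ε * N0 := by
      obtain ⟨N0, hN0⟩ := exists_nat_gt (b * t / ε)
      refine ⟨N0, ?_⟩
      rw [div_lt_iff₀ hε0] at hN0
      nlinarith
    obtain ⟨n, hbig, hn1, hnN0, hsmall⟩ :=
      (hfreq.and_eventually ((Filter.eventually_ge_atTop 1).and
        ((Filter.eventually_ge_atTop N0).and hevsmall))).exists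
    -- derive contradiction
    have hnpos : (0 : ℝ) < n := by
      exact_mod_cast (Nat.one_le_iff_ne_zero.mp hn1).bot_lt
    have hlog : (s - ε) * n < Real.log ‖P n‖ := by
      have := (mul_lt_mul_iff_left₀ hnpos).mpr hbig
      rw [hf] at this
      calc (s - ε) * n < (n : ℝ)⁻¹ * Real.log ‖P n‖ * n := this
        _ = Real.log ‖P n‖ := by field_simp
    have hPpos : 0 < ‖P n‖ := by
      by_contra h
      push_neg at h
      have h0 : ‖P n‖ = 0 := le_antisymm h (norm_nonneg _)
      rw [h0, Real.log_zero] at hlog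
      nlinarith
    have hPn : Real.exp ((s - ε) * n) < ‖P n‖ := by
      rw [← Real.exp_log hPpos]
      exact Real.exp_lt_exp.mpr hlog
    have hge : Real.exp (-b * t + ε * n) < ‖Complex.exp (-(lam n) * t) • P n‖ := by
      rw [hterm]
      calc Real.exp (-b * t + ε * n)
          = Real.exp (-(a * n + b) * t) * Real.exp ((s - ε) * n) := by
            rw [← Real.exp_add]
            congr 1
            have : s - ε = a * t + ε := by rw [hε]; ring
            nlinarith [this]
        _ < Real.exp (-(a * n + b) * t) * ‖P n‖ :=
            (mul_lt_mul_iff_right₀ (Real.exp_pos _)).mpr hPn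
    have h1lt : (1 : ℝ) < Real.exp (-b * t + ε * n) := by
      rw [← Real.exp_zero]
      apply Real.exp_lt_exp.mpr
      have hNn : (N0 : ℝ) ≤ n := by exact_mod_cast hnN0
      have : ε * N0 ≤ ε * n := mul_le_mul_of_nonneg_left hNn hε0.le
      linarith
    linarith [hsmall, h1lt.trans hge]
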